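/- For an elementary abelian 2-group V and any integer n > 0, there is a short exact sequence 0 → 2·I(V)^n → I(V)^{n+1} → Ī(V)^{n+1} → 0, where Ī(V)^{n+1} denotes the (n+1)-st power of the augmentation ideal of the mod 2 group algebra F_2[V]; equivalently, the image of I(V)^{n+1} in F_2[V] under reduction mod 2 is Ī(V)^{n+1}, with kernel 2·I(V)^n. -/

import Mathlib

/-- The augmentation map of the integral group ring `ℤ[V]`. -/
noncomputable def augZ (V : Type) [AddCommGroup V] :
    AddMonoidAlgebra ℤ V →ₐ[ℤ] ℤ :=
  AddMonoidAlgebra.lift ℤ ℤ V 1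

/-- The augmentation ideal `I(V)` of `ℤ[V]`. -/
noncomputable def augIdealZ (V : Type) [AddCommGroup V] :
    Ideal (AddMonoidAlgebra ℤ V) :=
  RingHom.ker (augZ V).toRingHom

/-- The augmentation map of the mod 2 group algebra `𝔽₂[V]`. -/
noncomputable def aug2 (V : Type) [AddCommGroup V] :
    AddMonoidAlgebra (ZMod 2) V →ₐ[ZMod 2] ZMod 2 :=
  AddMonoidAlgebra.lift (ZMod 2) (ZMod 2) V 1

/-- The augmentation ideal `Ī(V)` of `𝔽₂[V]`. -/
noncomputable def augIdeal2 (V : Type) [AddCommGroup V] :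
    Ideal (AddMonoidAlgebra (ZMod 2) V) :=
  RingHom.ker (aug2 V).toRingHom

/-- Reduction mod 2, `ℤ[V] → 𝔽₂[V]`. -/
noncomputable def red2 (V : Type) [AddCommGroup V] :
    AddMonoidAlgebra ℤ V →+* AddMonoidAlgebra (ZMod 2) V :=
  (AddMonoidAlgebra.lift ℤ (AddMonoidAlgebra (ZMod 2) V) V
    (AddMonoidAlgebra.of (ZMod 2) V)).toRingHom



open Finset

noncomputable section AuxDev

open scoped Classical
set_option linter.unusedSectionVars false
set_option linter.deprecated false

variable (V : Type) [AddCommGroup V] [Module (ZMod 2) V]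

abbrev Idx := Module.Free.ChooseBasisIndex (ZMod 2) V

noncomputable def bb : Module.Basis (Idx V) (ZMod 2) V := Module.Free.chooseBasis (ZMod 2) V

lemma add_self_eq_zero' (g : V) : g + g = 0 := by
  have h : (2 : ℕ) • g = ((2 : ℕ) : ZMod 2) • g := (Nat.cast_smul_eq_nsmul (ZMod 2) 2 g).symm
  have h2 : ((2 : ℕ) : ZMod 2) = 0 := by decide
  rw [h2, zero_smul, two_nsmul] at h
  exact h

/-- support of `g` in the chosen basis -/
noncomputable def TT (g : V) : Finset (Idx V) := ((bb V).repr g).support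

noncomputable def xi (i : Idx V) : AddMonoidAlgebra ℤ V :=
  AddMonoidAlgebra.single (bb V i) 1 - 1

noncomputable def aP (S : Finset (Idx V)) : AddMonoidAlgebra ℤ V := ∏ i ∈ S, xi V i

noncomputable def Phi : AddMonoidAlgebra ℤ V →ₗ[ℤ] (Finset (Idx V) →₀ ℤ) :=
  (Finsupp.lsum ℤ fun g => ∑ S ∈ (TT V g).powerset, Finsupp.lsingle S) ∘ₗ
    (AddMonoidAlgebra.coeffLinearEquiv ℤ).toLinearMap

lemma Phi_single (g : V) (c : ℤ) :
    Phi V (AddMonoidAlgebra.single g c) = ∑ S ∈ (TT V g).powerset, Finsupp.single S c := by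
  have h : Phi V (AddMonoidAlgebra.single g c)
      = (∑ S ∈ (TT V g).powerset, Finsupp.lsingle S : ℤ →ₗ[ℤ] _) c :=
    Finsupp.lsum_single (R := ℤ) ℤ _ g c
  rw [h]
  simp [Finsupp.lsingle]

lemma augZ_single (g : V) (c : ℤ) : augZ V (AddMonoidAlgebra.single g c) = c := by
  rw [augZ, AddMonoidAlgebra.lift_single]; simp

lemma xi_mem (i : Idx V) : xi V i ∈ augIdealZ V := by
  have : augZ V (xi V i) = 0 := by
    rw [xi, map_sub, augZ_single, map_one, sub_self]
  simpa [augIdealZ, RingHom.mem_ker] using this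

lemma xi_sq (i : Idx V) : xi V i * xi V i = -2 * xi V i := by
  have h : (AddMonoidAlgebra.single (bb V i) 1 : AddMonoidAlgebra ℤ V) *
      AddMonoidAlgebra.single (bb V i) 1 = 1 := by
    rw [AddMonoidAlgebra.single_mul_single, add_self_eq_zero', mul_one, AddMonoidAlgebra.one_def]
  rw [xi]
  linear_combination h

lemma single_single_mul (g h : V) (a c : ℤ) :
    (AddMonoidAlgebra.single g a : AddMonoidAlgebra ℤ V) * AddMonoidAlgebra.single h c
      = AddMonoidAlgebra.single (g + h) (a * c) := AddMonoidAlgebra.single_mul_single ..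

lemma prod_single_basis (t : Finset (Idx V)) :
    ∏ i ∈ t, (AddMonoidAlgebra.single (bb V i) 1 : AddMonoidAlgebra ℤ V)
      = AddMonoidAlgebra.single (∑ i ∈ t, bb V i) 1 := by
  induction t using Finset.induction_on with
  | empty => simp [AddMonoidAlgebra.one_def]
  | insert _ _ hni ih =>
    rw [Finset.prod_insert hni, ih, single_single_mul, Finset.sum_insert hni, one_mul]

lemma sum_basis_TT (g : V) : ∑ i ∈ TT V g, bb V i = g := by
  have h1 : ∀ a : ZMod 2, a ≠ 0 → a = 1 := by decide
  conv_rhs => rw [← (bb V).linearCombination_repr g]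
  rw [Finsupp.linearCombination_apply, Finsupp.sum]
  refine Finset.sum_congr rfl fun i hi => ?_
  rw [h1 _ (Finsupp.mem_support_iff.mp hi), one_smul]

lemma single_eq_prod (g : V) :
    (AddMonoidAlgebra.single g 1 : AddMonoidAlgebra ℤ V)
      = ∏ i ∈ TT V g, AddMonoidAlgebra.single (bb V i) 1 := by
  rw [prod_single_basis, sum_basis_TT]

lemma TT_sum_basis (t : Finset (Idx V)) : TT V (∑ i ∈ t, bb V i) = t := by
  rw [TT, map_sum]
  simp only [Module.Basis.repr_self]
  rw [Finsupp.support_sum_eq_biUnion]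
  · simp [Finsupp.support_single_ne_zero]
  · intro i j hij
    simp only [Finsupp.support_single_ne_zero _ (one_ne_zero)]
    exact Finset.disjoint_singleton.2 hij

lemma aP_prod_mem (S : Finset (Idx V)) : aP V S ∈ augIdealZ V ^ S.card := by
  induction S using Finset.induction_on with
  | empty => simp [aP]
  | @insert i S hni ih =>
    rw [aP, Finset.prod_insert hni, Finset.card_insert_of_notMem hni, pow_succ, mul_comm]
    exact Ideal.mul_mem_mul (xi_mem V i) ih

lemma aP_mul (S T : Finset (Idx V)) :
    aP V S * aP V T = (-2 : AddMonoidAlgebra ℤ V) ^ (S ∩ T).card * aP V (S ∪ T) := by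
  have h1 : aP V S = aP V (S \ T) * aP V (S ∩ T) := by
    rw [aP, aP, aP, ← Finset.prod_union (Finset.disjoint_sdiff_inter S T),
      Finset.sdiff_union_inter]
  have h2 : aP V T = aP V (T \ S) * aP V (S ∩ T) := by
    rw [aP, aP, aP, Finset.inter_comm S T, ← Finset.prod_union (Finset.disjoint_sdiff_inter T S),
      Finset.sdiff_union_inter]
  have h3 : aP V (S ∪ T) = aP V (S \ T) * (aP V (T \ S) * aP V (S ∩ T)) := by
    rw [aP, aP, aP, aP, Finset.inter_comm S T,
      ← Finset.prod_union (Finset.disjoint_sdiff_inter T S), Finset.sdiff_union_inter,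
      ← Finset.prod_union Finset.sdiff_disjoint, Finset.sdiff_union_self_eq_union]
  have h4 : aP V (S ∩ T) * aP V (S ∩ T)
      = (-2 : AddMonoidAlgebra ℤ V) ^ (S ∩ T).card * aP V (S ∩ T) := by
    rw [aP, ← Finset.prod_mul_distrib]
    rw [Finset.prod_congr rfl fun i _ => xi_sq V i]
    rw [Finset.prod_mul_distrib, Finset.prod_const]
  rw [h1, h2, h3]
  linear_combination (aP V (S \ T) * aP V (T \ S)) * h4

end AuxDev

noncomputable section Aux2
open scoped Classical
set_option linter.unusedSectionVars false

lemma powersetSum {α : Type} (m : Finset α) :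
    ∑ q ∈ m.powerset, (-1:ℤ)^((m\q).card) = if m = ∅ then 1 else 0 := by
  classical
  have key : ∀ q ∈ m.powerset, (-1:ℤ)^((m\q).card) = (-1)^(m.card) * (-1)^(q.card) := by
    intro q hq
    have h1 : (m\q).card + q.card = m.card :=
      Finset.card_sdiff_add_card_eq_card (Finset.mem_powerset.mp hq)
    have h2 : (-1:ℤ)^(m.card) = (-1)^((m\q).card) * (-1)^(q.card) := by rw [← pow_add, h1]
    rw [h2, mul_assoc, ← pow_add]
    rw [(Even.add_self q.card).neg_one_pow, mul_one]
  rw [Finset.sum_congr rfl key, ← Finset.mul_sum, Finset.sum_powerset_neg_one_pow_card]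
  by_cases hm : m = ∅ <;> simp [hm]

lemma sdiff_sdiff_helper {α : Type} [DecidableEq α] (W U t : Finset α) (h : U ⊆ t) :
    W \ t = (W \ U) \ (t \ U) := by
  ext x
  simp only [Finset.mem_sdiff]
  constructor
  · rintro ⟨hW, ht⟩
    exact ⟨⟨hW, fun hU => ht (h hU)⟩, fun hq => ht hq.1⟩
  · rintro ⟨⟨hW, hU⟩, hq⟩
    exact ⟨hW, fun ht' => hq ⟨ht', hU⟩⟩

lemma combC {α : Type} (W U : Finset α) :
    (∑ t ∈ W.powerset, (-1:ℤ)^((W\t).card) * (if U ⊆ t then 1 else 0))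
      = if U = W then 1 else 0 := by
  classical
  simp only [mul_ite, mul_one, mul_zero]
  rw [← Finset.sum_filter]
  by_cases hUW : U ⊆ W
  · have hb : ∑ t ∈ W.powerset.filter (fun t => U ⊆ t), (-1:ℤ)^((W\t).card)
        = ∑ q ∈ (W\U).powerset, (-1:ℤ)^(((W\U)\q).card) := by
      refine Finset.sum_bij' (fun t _ => t \ U) (fun q _ => U ∪ q) ?_ ?_ ?_ ?_ ?_
      · intro t ht
        rw [Finset.mem_powerset]
        exact Finset.sdiff_subset_sdiff (Finset.mem_powerset.mp (Finset.mem_filter.mp ht).1)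
          (le_refl U)
      · intro q hq
        rw [Finset.mem_filter, Finset.mem_powerset]
        exact ⟨Finset.union_subset hUW ((Finset.mem_powerset.mp hq).trans Finset.sdiff_subset),
          Finset.subset_union_left⟩
      · intro t ht
        exact Finset.union_sdiff_of_subset (Finset.mem_filter.mp ht).2
      · intro q hq
        exact Finset.union_sdiff_cancel_left
          (Finset.disjoint_sdiff.mono_right (Finset.mem_powerset.mp hq))
      · intro t ht
        rw [sdiff_sdiff_helper W U t (Finset.mem_filter.mp ht).2]
    rw [hb, powersetSum]
    have heq : (W \ U = ∅) ↔ (U = W) := by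
      rw [Finset.sdiff_eq_empty_iff_subset]
      exact ⟨fun h => le_antisymm hUW h, fun h => h ▸ le_refl _⟩
    simp only [heq]
  · have hf : (W.powerset.filter (fun t => U ⊆ t)) = ∅ := by
      rw [Finset.filter_eq_empty_iff]
      intro t ht hUt
      exact hUW (hUt.trans (Finset.mem_powerset.mp ht))
    rw [hf, Finset.sum_empty, eq_comm, if_neg]
    rintro rfl
    exact hUW (le_refl _)

end Aux2

noncomputable section Aux3
open scoped Classical
set_option linter.unusedSectionVars false
variable (V : Type) [AddCommGroup V] [Module (ZMod 2) V]

lemma zsmul_eq_intmul (c : ℤ) (x : AddMonoidAlgebra ℤ V) : c • x = (c : AddMonoidAlgebra ℤ V) * x := by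
  rw [zsmul_eq_mul]

lemma aP_expand (W : Finset (Idx V)) :
    aP V W = ∑ t ∈ W.powerset,
      ((-1:ℤ)^((W\t).card)) • AddMonoidAlgebra.single (∑ i ∈ t, bb V i) (1:ℤ) := by
  have h : aP V W = ∏ i ∈ W, ((AddMonoidAlgebra.single (bb V i) 1 : AddMonoidAlgebra ℤ V) + (-1)) := by
    rw [aP]
    exact Finset.prod_congr rfl fun i _ => by rw [xi, sub_eq_add_neg]
  rw [h, Finset.prod_add]
  refine Finset.sum_congr rfl fun t ht => ?_
  rw [prod_single_basis, Finset.prod_const]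
  rw [zsmul_eq_intmul, mul_comm]
  push_cast
  ring
end Aux3

noncomputable section Aux4
open scoped Classical
set_option linter.unusedSectionVars false
variable (V : Type) [AddCommGroup V] [Module (ZMod 2) V]

lemma Phi_aP (W : Finset (Idx V)) : Phi V (aP V W) = Finsupp.single W 1 := by
  rw [aP_expand, map_sum]
  simp only [LinearMap.map_smul, Phi_single, TT_sum_basis]
  ext U
  rw [Finsupp.finset_sum_apply]
  simp only [Finsupp.smul_apply, Finsupp.finset_sum_apply, Finsupp.single_apply, smul_eq_mul]
  have h1 : ∀ t ∈ W.powerset,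
      ((-1:ℤ)^((W\t).card)) * (∑ S ∈ t.powerset, if S = U then 1 else 0)
        = ((-1:ℤ)^((W\t).card)) * (if U ⊆ t then 1 else 0) := by
    intro t _
    rw [Finset.sum_ite_eq' t.powerset U fun _ => (1:ℤ)]
    congr 1
    simp [Finset.mem_powerset]
  rw [Finset.sum_congr rfl h1, combC]
  rcases eq_or_ne U W with rfl | h
  · simp
  · rw [if_neg h, if_neg fun hh => h hh.symm]
end Aux4

noncomputable section Aux5
open scoped Classical
set_option linter.unusedSectionVars false
variable (V : Type) [AddCommGroup V] [Module (ZMod 2) V]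

lemma sum_aP_powerset (t : Finset (Idx V)) :
    ∑ S ∈ t.powerset, aP V S = AddMonoidAlgebra.single (∑ i ∈ t, bb V i) (1:ℤ) := by
  rw [← prod_single_basis]
  have h : ∀ i ∈ t, (AddMonoidAlgebra.single (bb V i) 1 : AddMonoidAlgebra ℤ V) = xi V i + 1 :=
    fun i _ => by rw [xi]; ring
  rw [Finset.prod_congr rfl h, Finset.prod_add]
  exact (Finset.sum_congr rfl fun S _ => by simp [aP]).symm

noncomputable def Psi : (Finset (Idx V) →₀ ℤ) →ₗ[ℤ] AddMonoidAlgebra ℤ V :=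
  Finsupp.lsum ℤ fun S => LinearMap.toSpanSingleton ℤ _ (aP V S)

lemma Psi_single (S : Finset (Idx V)) (c : ℤ) : Psi V (Finsupp.single S c) = c • aP V S := by
  have h : Psi V (Finsupp.single S c)
      = (LinearMap.toSpanSingleton ℤ _ (aP V S)) c := Finsupp.lsum_single _ _ _ _
  rw [h, LinearMap.toSpanSingleton_apply]

lemma Psi_Phi (x : AddMonoidAlgebra ℤ V) : Psi V (Phi V x) = x := by
  have h : (Psi V).comp (Phi V) = LinearMap.id := by
    refine AddMonoidAlgebra.lhom_ext' fun g => LinearMap.ext fun c => ?_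
    show Psi V (Phi V (AddMonoidAlgebra.single g c)) = AddMonoidAlgebra.single g c
    rw [Phi_single, map_sum]
    have h2 : ∀ S ∈ (TT V g).powerset, Psi V (Finsupp.single S c) = c • aP V S :=
      fun S _ => Psi_single V S c
    rw [Finset.sum_congr rfl h2, ← Finset.smul_sum, sum_aP_powerset, sum_basis_TT]
    rw [AddMonoidAlgebra.smul_single, smul_eq_mul, mul_one]
  exact DFunLike.congr_fun h x

lemma Phi_apply_empty (x : AddMonoidAlgebra ℤ V) : Phi V x ∅ = augZ V x := by
  induction x using AddMonoidAlgebra.induction_linear with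
  | zero => simp
  | add f g hf hg =>
      rw [map_add, map_add, Finsupp.add_apply, hf, hg]
  | single g c =>
      rw [Phi_single, augZ_single, Finsupp.finset_sum_apply]
      simp only [Finsupp.single_apply]
      rw [Finset.sum_ite_eq' _ ∅ fun _ => c]
      simp

end Aux5

noncomputable section Aux6
open scoped Classical
set_option linter.unusedSectionVars false
variable (V : Type) [AddCommGroup V] [Module (ZMod 2) V]

lemma Psi_eq_sum (f : Finset (Idx V) →₀ ℤ) : Psi V f = f.sum fun S c => c • aP V S := by
  rw [Psi, Finsupp.lsum_apply]
  exact Finsupp.sum_congr fun S _ => rfl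

lemma single_sub_one_eq (g : V) :
    (AddMonoidAlgebra.single g 1 : AddMonoidAlgebra ℤ V) - 1
      = ∑ T ∈ (TT V g).powerset.erase ∅, aP V T := by
  have h := sum_aP_powerset V (TT V g)
  rw [sum_basis_TT] at h
  rw [← h, ← Finset.sum_erase_add _ _ (Finset.empty_mem_powerset (TT V g))]
  simp [aP]

def Hdvd (m : ℕ) (x : AddMonoidAlgebra ℤ V) : Prop :=
  ∀ S : Finset (Idx V), (2:ℤ)^(m - S.card) ∣ Phi V x S

lemma Hdvd_step (m : ℕ) (p : AddMonoidAlgebra ℤ V) (hp : Hdvd V m p) (g : V) :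
    Hdvd V (m+1) (p * (AddMonoidAlgebra.single g 1 - 1)) := by
  intro U
  have hx : p * (AddMonoidAlgebra.single g 1 - 1)
      = (Phi V p).sum fun S c => ∑ T ∈ (TT V g).powerset.erase ∅,
          (c * (-2:ℤ)^((S ∩ T).card)) • aP V (S ∪ T) := by
    conv_lhs => rw [← Psi_Phi V p, Psi_eq_sum, single_sub_one_eq V g]
    rw [Finsupp.sum_mul]
    refine Finsupp.sum_congr fun S _ => ?_
    rw [smul_mul_assoc, Finset.mul_sum, Finset.smul_sum]
    refine Finset.sum_congr rfl fun T _ => ?_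
    rw [aP_mul]
    rw [← smul_smul]
    congr 1
    rw [zsmul_eq_intmul]
    push_cast
    ring
  rw [hx, map_finsuppSum, Finsupp.sum_apply]
  rw [Finsupp.sum]
  refine dvd_sum fun S hS => ?_
  rw [map_sum, Finsupp.finset_sum_apply]
  refine dvd_sum fun T hT => ?_
  rw [map_smul, Finsupp.smul_apply, Phi_aP, smul_eq_mul, Finsupp.single_apply]
  by_cases hSTU : S ∪ T = U
  · rw [if_pos hSTU, mul_one]
    have hT1 : 1 ≤ T.card := by
      have hTne : T ≠ ∅ := (Finset.mem_erase.mp hT).1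
      exact Finset.card_pos.mpr (Finset.nonempty_iff_ne_empty.mpr hTne)
    have hcard : (S ∪ T).card + (S ∩ T).card = S.card + T.card :=
      Finset.card_union_add_card_inter S T
    have hle : (m+1) - U.card ≤ (m - S.card) + (S ∩ T).card := by
      rw [← hSTU]
      omega
    have d1 : (2:ℤ)^(m - S.card) ∣ Phi V p S := hp S
    have d2 : (2:ℤ)^((S ∩ T).card) ∣ (-2:ℤ)^((S ∩ T).card) :=
      ⟨(-1)^((S ∩ T).card), by rw [← mul_pow]; norm_num⟩
    have d3 := mul_dvd_mul d1 d2
    rw [← pow_add] at d3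
    exact (pow_dvd_pow 2 hle).trans d3
  · rw [if_neg hSTU, mul_zero]
    exact dvd_zero _

lemma forward_dvd : ∀ (m : ℕ) (x : AddMonoidAlgebra ℤ V), x ∈ augIdealZ V ^ m → Hdvd V m x := by
  intro m
  induction m with
  | zero => intro x _ S; simp
  | succ m ih =>
    intro x hx
    rw [pow_succ] at hx
    refine Submodule.mul_induction_on hx ?_ ?_
    · intro p hp q hq
      have haug : augZ V q = 0 := hq
      have hsum : ∑ g ∈ q.coeff.support, AddMonoidAlgebra.single g (q.coeff g) = q :=
          AddMonoidAlgebra.sum_coeff_single q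
      have haug2 : ∑ g ∈ q.coeff.support, q.coeff g = 0 := by
        have : augZ V (∑ g ∈ q.coeff.support, AddMonoidAlgebra.single g (q.coeff g)) = 0 := by
          rw [hsum]; exact haug
        rw [map_sum] at this
        simpa [augZ_single] using this
      have hdec : q = ∑ g ∈ q.coeff.support, q.coeff g • (AddMonoidAlgebra.single g 1 - 1) := by
        have : ∑ g ∈ q.coeff.support, q.coeff g • (AddMonoidAlgebra.single g 1 - 1)
            = (∑ g ∈ q.coeff.support, AddMonoidAlgebra.single g (q.coeff g))
              - (∑ g ∈ q.coeff.support, q.coeff g) • (1 : AddMonoidAlgebra ℤ V) := by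
          rw [Finset.sum_smul, ← Finset.sum_sub_distrib]
          refine Finset.sum_congr rfl fun g _ => ?_
          rw [smul_sub]
          congr 1
          rw [AddMonoidAlgebra.smul_single, smul_eq_mul, mul_one]
        rw [this, hsum, haug2, zero_smul, sub_zero]
      have hpq : p * q = ∑ g ∈ q.coeff.support, q.coeff g • (p * (AddMonoidAlgebra.single g 1 - 1)) := by
        conv_lhs => rw [hdec]
        rw [Finset.mul_sum]
        exact Finset.sum_congr rfl fun g _ => (mul_smul_comm _ _ _)
      intro U
      rw [hpq, map_sum, Finsupp.finset_sum_apply]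
      refine dvd_sum fun g hg => ?_
      rw [map_smul, Finsupp.smul_apply, smul_eq_mul]
      exact Dvd.dvd.mul_left (Hdvd_step V m p (ih p hp) g U) _
    · intro a b ha hb U
      rw [map_add, Finsupp.add_apply]
      exact dvd_add (ha U) (hb U)

end Aux6

noncomputable section Aux7
open scoped Classical
set_option linter.unusedSectionVars false
variable (V : Type) [AddCommGroup V] [Module (ZMod 2) V]

lemma two_pow_mul_xi (i : Idx V) (k : ℕ) :
    (2:AddMonoidAlgebra ℤ V)^k * xi V i = (-1:AddMonoidAlgebra ℤ V)^k * (xi V i)^(k+1) := by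
  induction k with
  | zero => simp
  | succ k ih =>
    have hsq := xi_sq V i
    linear_combination 2*ih + ((-1:AddMonoidAlgebra ℤ V)^k * (xi V i)^k) * hsq

lemma pow2_aP_mem (S : Finset (Idx V)) (hS : S.Nonempty) (k : ℕ) :
    (2:ℤ)^k • aP V S ∈ augIdealZ V ^ (k + S.card) := by
  obtain ⟨i, hi⟩ := hS
  have h1 : aP V S = xi V i * aP V (S.erase i) := by
    rw [aP, aP, Finset.mul_prod_erase _ _ hi]
  have h2 : (2:ℤ)^k • aP V S
      = (-1:AddMonoidAlgebra ℤ V)^k * ((xi V i)^(k+1) * aP V (S.erase i)) := by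
    rw [h1]
    calc (2:ℤ)^k • (xi V i * aP V (S.erase i))
        = ((2:AddMonoidAlgebra ℤ V)^k * xi V i) * aP V (S.erase i) := by
          rw [zsmul_eq_intmul]; push_cast; ring
      _ = ((-1:AddMonoidAlgebra ℤ V)^k * (xi V i)^(k+1)) * aP V (S.erase i) := by
          rw [two_pow_mul_xi]
      _ = (-1:AddMonoidAlgebra ℤ V)^k * ((xi V i)^(k+1) * aP V (S.erase i)) := by ring
  have m1 : (xi V i)^(k+1) ∈ augIdealZ V ^ (k+1) := Ideal.pow_mem_pow (xi_mem V i) _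
  have m3 := Ideal.mul_mem_mul m1 (aP_prod_mem V (S.erase i))
  rw [← pow_add] at m3
  have hcard : (k+1) + (S.erase i).card = k + S.card := by
    rw [Finset.card_erase_of_mem hi]
    have := Finset.card_pos.mpr ⟨i, hi⟩
    omega
  rw [hcard] at m3
  rw [h2]
  exact Ideal.mul_mem_left _ _ m3

lemma toPow (n : ℕ) (x : AddMonoidAlgebra ℤ V) (h0 : augZ V x = 0)
    (hd : ∀ S, (2:ℤ)^(n - S.card) ∣ Phi V x S) : x ∈ augIdealZ V ^ n := by
  rw [← Psi_Phi V x, Psi_eq_sum, Finsupp.sum]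
  refine Submodule.sum_mem _ fun S hS => ?_
  have hSne : S ≠ ∅ := by
    rintro rfl
    have h := Phi_apply_empty V x
    rw [h0] at h
    exact (Finsupp.mem_support_iff.mp hS) h
  obtain ⟨u, hu⟩ := hd S
  rw [hu, mul_comm, mul_smul]
  refine Submodule.smul_of_tower_mem _ u ?_
  refine Ideal.pow_le_pow_right (by omega : n ≤ (n - S.card) + S.card) ?_
  exact pow2_aP_mem V S (Finset.nonempty_iff_ne_empty.mpr hSne) (n - S.card)

end Aux7

noncomputable section Aux8
open scoped Classical
set_option linter.unusedSectionVars false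
variable (V : Type) [AddCommGroup V] [Module (ZMod 2) V]

lemma aug2_single (g : V) (c : ZMod 2) : aug2 V (AddMonoidAlgebra.single g c) = c := by
  rw [aug2, AddMonoidAlgebra.lift_single]; simp

lemma red2_single (g : V) (c : ℤ) :
    red2 V (AddMonoidAlgebra.single g c) = AddMonoidAlgebra.single g (c : ZMod 2) := by
  show (AddMonoidAlgebra.lift ℤ (AddMonoidAlgebra (ZMod 2) V) V
    (AddMonoidAlgebra.of (ZMod 2) V)) (AddMonoidAlgebra.single g c) = _
  rw [AddMonoidAlgebra.lift_single, AddMonoidAlgebra.of_apply]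
  rw [show Multiplicative.toAdd (Multiplicative.ofAdd g) = g from rfl]
  rw [AddMonoidAlgebra.smul_single]
  congr 1
  rw [zsmul_eq_mul, mul_one]

lemma red2_apply (x : AddMonoidAlgebra ℤ V) (g : V) :
    (red2 V x).coeff g = ((x.coeff g : ℤ) : ZMod 2) := by
  induction x using AddMonoidAlgebra.induction_linear with
  | zero => simp
  | add f g' hf hg =>
      rw [map_add, AddMonoidAlgebra.coeff_add, AddMonoidAlgebra.coeff_add, Finsupp.add_apply,
        Finsupp.add_apply, hf, hg]
      push_cast
      ring
  | single g' c =>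
      rw [red2_single]
      rw [AddMonoidAlgebra.coeff_single, AddMonoidAlgebra.coeff_single]
      rw [Finsupp.single_apply, Finsupp.single_apply]
      split <;> simp

lemma zmod2_val_cast (a : ZMod 2) : ((a.val : ℤ) : ZMod 2) = a := by revert a; decide

lemma red2_surj : Function.Surjective (red2 V) := by
  intro y
  refine ⟨(AddMonoidAlgebra.ofCoeff (Finsupp.mapRange (fun a : ZMod 2 => (a.val : ℤ)) (by simp) y.coeff) : AddMonoidAlgebra ℤ V), ?_⟩
  ext g
  rw [red2_apply, AddMonoidAlgebra.coeff_ofCoeff, Finsupp.mapRange_apply, zmod2_val_cast]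

lemma aug2_red2 (x : AddMonoidAlgebra ℤ V) :
    aug2 V (red2 V x) = ((augZ V x : ℤ) : ZMod 2) := by
  induction x using AddMonoidAlgebra.induction_linear with
  | zero => simp
  | add f g hf hg => rw [map_add, map_add, map_add, hf, hg]; push_cast; ring
  | single g c =>
      rw [red2_single, aug2_single, augZ_single]

lemma map_aug_ideal : Ideal.map (red2 V) (augIdealZ V) = augIdeal2 V := by
  apply le_antisymm
  · rw [Ideal.map_le_iff_le_comap]
    intro x hx
    have hx0 : augZ V x = 0 := hx
    show red2 V x ∈ augIdeal2 V
    show aug2 V (red2 V x) = 0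
    rw [aug2_red2, hx0]
    simp
  · intro y hy
    have hy0 : aug2 V y = 0 := hy
    set x0 : AddMonoidAlgebra ℤ V :=
      (AddMonoidAlgebra.ofCoeff (Finsupp.mapRange (fun a : ZMod 2 => (a.val : ℤ)) (by simp) y.coeff) : AddMonoidAlgebra ℤ V) with hx0def
    have hx0 : red2 V x0 = y := by
      ext g
      rw [red2_apply, hx0def, AddMonoidAlgebra.coeff_ofCoeff, Finsupp.mapRange_apply, zmod2_val_cast]
    set x1 : AddMonoidAlgebra ℤ V := x0 - AddMonoidAlgebra.single 0 (augZ V x0) with hx1def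
    have hx1I : x1 ∈ augIdealZ V := by
      show augZ V x1 = 0
      rw [hx1def, map_sub, augZ_single, sub_self]
    have hred : red2 V x1 = y := by
      rw [hx1def, map_sub, red2_single, hx0]
      have : ((augZ V x0 : ℤ) : ZMod 2) = 0 := by
        rw [← aug2_red2, hx0, hy0]
      rw [this]
      rw [AddMonoidAlgebra.single_zero, sub_zero]
    exact hred ▸ Ideal.mem_map_of_mem _ hx1I

lemma two_eq_zero2 : (2 : AddMonoidAlgebra (ZMod 2) V) = 0 := by
  have h2 : (2 : AddMonoidAlgebra (ZMod 2) V) = 1 + 1 := by norm_num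
  rw [h2, AddMonoidAlgebra.one_def]
  rw [← AddMonoidAlgebra.single_add]
  have h : (1 + 1 : ZMod 2) = 0 := by decide
  rw [h, AddMonoidAlgebra.single_zero]

end Aux8

noncomputable section Final
open scoped Classical
set_option linter.unusedSectionVars false

end Final

/-- For an elementary abelian 2-group `V` and `n > 0`, there is a short exact sequence
`0 → 2·I(V)^n → I(V)^(n+1) → Ī(V)^(n+1) → 0`: the image of `I(V)^(n+1)` under reduction
mod 2 is `Ī(V)^(n+1)`, and the kernel of the reduction restricted to `I(V)^(n+1)` is
`2·I(V)^n`. -/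
theorem stmt2 (V : Type) [AddCommGroup V] [Module (ZMod 2) V] (n : ℕ) (hn : 0 < n) :
    (red2 V '' ((augIdealZ V ^ (n + 1) : Ideal (AddMonoidAlgebra ℤ V)) : Set (AddMonoidAlgebra ℤ V))
        = ((augIdeal2 V ^ (n + 1) : Ideal (AddMonoidAlgebra (ZMod 2) V)) :
            Set (AddMonoidAlgebra (ZMod 2) V)))
    ∧ ∀ x ∈ augIdealZ V ^ (n + 1),
        (red2 V x = 0 ↔ ∃ z ∈ augIdealZ V ^ n, x = 2 * z) := by
  constructor
  · apply subset_antisymm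
    · rintro _ ⟨x, hx, rfl⟩
      have h := Ideal.mem_map_of_mem (red2 V) (SetLike.mem_coe.mp hx)
      rw [Ideal.map_pow, map_aug_ideal] at h
      exact SetLike.mem_coe.mpr h
    · intro y hy
      have hy' : y ∈ Ideal.map (red2 V) (augIdealZ V ^ (n+1)) := by
        rw [Ideal.map_pow, map_aug_ideal]
        exact SetLike.mem_coe.mp hy
      exact Ideal.mem_image_of_mem_map_of_surjective _ (red2_surj V) hy'
  · intro x hx
    constructor
    · intro h0
      set w : AddMonoidAlgebra ℤ V :=
        (AddMonoidAlgebra.ofCoeff (Finsupp.mapRange (fun c : ℤ => c / 2) (by norm_num) x.coeff) : AddMonoidAlgebra ℤ V) with hwdef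
      have hxw : x = w + w := by
        ext g
        have hcoef : ((x.coeff g : ℤ) : ZMod 2) = 0 := by
          rw [← red2_apply, h0]
          rfl
        have hdvd : (2:ℤ) ∣ x.coeff g := by
          rwa [ZMod.intCast_zmod_eq_zero_iff_dvd] at hcoef
        rw [AddMonoidAlgebra.coeff_add, Finsupp.add_apply, hwdef, AddMonoidAlgebra.coeff_ofCoeff,
            Finsupp.mapRange_apply]
        omega
      have hPhix : ∀ S, Phi V x S = 2 * Phi V w S := by
        intro S
        rw [hxw, map_add, Finsupp.add_apply, two_mul]
      have haugx : augZ V x = 0 :=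
        Ideal.pow_le_self (Nat.succ_ne_zero n) hx
      have haugw : augZ V w = 0 := by
        have h := haugx
        rw [hxw, map_add] at h
        omega
      have hdivw : ∀ S, (2:ℤ)^(n - S.card) ∣ Phi V w S := by
        intro S
        rcases le_or_gt n S.card with hc | hc
        · rw [Nat.sub_eq_zero_of_le hc, pow_zero]
          exact one_dvd _
        · have h := forward_dvd V (n+1) x hx S
          rw [hPhix S] at h
          obtain ⟨u, hu⟩ := h
          rw [show n + 1 - S.card = (n - S.card) + 1 from by omega, pow_succ] at hu
          refine ⟨u, mul_left_cancel₀ (two_ne_zero) ?_⟩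
          linear_combination hu
      refine ⟨w, toPow V n w haugw hdivw, ?_⟩
      rw [hxw, two_mul]
    · rintro ⟨z, hz, rfl⟩
      rw [map_mul, map_ofNat, two_eq_zero2, zero_mul]
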